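/- The complete homogeneous symmetric polynomials f_{n−ℓ+1}, …, f_n in ℓ variables form a regular sequence in the polynomial ring 𝔽₂[x₁,…,x_ℓ] whenever n ≥ ℓ ≥ 1. -/

import Mathlib

open MvPolynomial Polynomial

noncomputable section HsymmRegularAux
set_option linter.unusedSectionVars false
set_option linter.unusedVariables false
set_option linter.unnecessarySimpa false

def T (ℓ : ℕ) : ℕ → ℕ → MvPolynomial (Fin ℓ) (ZMod 2)
  | _, 0 => 1
  | i, (d+1) =>
    if h : i < ℓ then T ℓ (i+1) (d+1) + X ⟨i, h⟩ * T ℓ i d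
    else 0
termination_by i d => (d, ℓ - i)
decreasing_by
  · exact Prod.Lex.right _ (by omega)
  · exact Prod.Lex.left _ _ (by omega)

lemma T_zero (ℓ i : ℕ) : T ℓ i 0 = 1 := by rw [T]

lemma T_succ_of_lt (ℓ i d : ℕ) (h : i < ℓ) :
    T ℓ i (d+1) = T ℓ (i+1) (d+1) + X ⟨i, h⟩ * T ℓ i d := by
  rw [T, dif_pos h]

lemma T_succ_of_le (ℓ i d : ℕ) (h : ℓ ≤ i) : T ℓ i (d+1) = 0 := by
  rw [T, dif_neg (by omega)]

def mdeg {σ : Type*} (m : σ →₀ ℕ) : ℕ := m.sum fun _ e => e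

lemma mdeg_eq_zero_iff {σ : Type*} (m : σ →₀ ℕ) : mdeg m = 0 ↔ m = 0 := by
  rw [mdeg, Finsupp.sum, Finset.sum_eq_zero_iff]
  constructor
  · intro h
    ext j
    by_cases hj : j ∈ m.support
    · exact h j hj
    · simpa using Finsupp.notMem_support_iff.1 hj
  · intro h; subst h; simp

lemma mdeg_add {σ : Type*} (m m' : σ →₀ ℕ) : mdeg (m + m') = mdeg m + mdeg m' :=
  Finsupp.sum_add_index' (fun _ => rfl) (fun _ _ _ => rfl)

lemma mdeg_single {σ : Type*} (s : σ) (e : ℕ) : mdeg (Finsupp.single s e) = e :=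
  Finsupp.sum_single_index rfl

lemma coeff_T (ℓ i d : ℕ) (m : Fin ℓ →₀ ℕ) :
    coeff m (T ℓ i d)
      = if mdeg m = d ∧ ∀ j : Fin ℓ, j.1 < i → m j = 0 then 1 else 0 := by
  match d with
  | 0 =>
    rw [T_zero]
    by_cases h : m = 0
    · subst h
      rw [if_pos ⟨(mdeg_eq_zero_iff 0).2 rfl, fun j _ => rfl⟩]
      simp
    · rw [if_neg, MvPolynomial.coeff_one, if_neg (Ne.symm h)]
      intro ⟨h1, _⟩
      exact h ((mdeg_eq_zero_iff m).1 h1)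
  | (d+1) =>
    by_cases hi : i < ℓ
    · rw [T_succ_of_lt ℓ i d hi, MvPolynomial.coeff_add, mul_comm, MvPolynomial.coeff_mul_X',
        coeff_T ℓ (i+1) (d+1) m]
      set s : Fin ℓ := ⟨i, hi⟩ with hs
      by_cases hms : m s = 0
      · rw [if_neg (show s ∉ m.support from by simp [Finsupp.mem_support_iff, hms]), add_zero]
        congr 1
        simp only [eq_iff_iff]
        constructor
        · rintro ⟨h1, h2⟩
          exact ⟨h1, fun j hj => h2 j (by omega)⟩
        · rintro ⟨h1, h2⟩
          refine ⟨h1, fun j hj => ?_⟩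
          rcases Nat.lt_or_ge j.1 i with hj' | hj'
          · exact h2 j hj'
          · have hsv : (s : ℕ) = i := rfl
            have : j = s := Fin.ext (by omega)
            rw [this]; exact hms
      · rw [if_neg (show ¬(mdeg m = d + 1 ∧ ∀ j : Fin ℓ, j.1 < i + 1 → m j = 0) from by
            rintro ⟨_, h2⟩
            exact hms (h2 s (by rw [hs]; exact Nat.lt_succ_self i))), zero_add,
          if_pos (show s ∈ m.support from by simp [Finsupp.mem_support_iff, hms]), coeff_T ℓ i d]
        set m' := m - Finsupp.single s 1 with hm'
        have hmm : m = m' + Finsupp.single s 1 := by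
          ext j
          by_cases hj : j = s
          · subst hj
            simp only [hm', Finsupp.add_apply, Finsupp.tsub_apply, Finsupp.single_eq_same]
            omega
          · simp [hm', Finsupp.single_eq_of_ne' (Ne.symm hj), Finsupp.tsub_apply]
        have hdeg : mdeg m = mdeg m' + 1 := by
          rw [hmm, mdeg_add, mdeg_single]
        have happ : ∀ j : Fin ℓ, j.1 < i → m' j = m j := by
          intro j hj
          have hjs : j ≠ s := by
            intro h
            rw [h, hs] at hj
            exact absurd hj (by simp)
          simp [hm', Finsupp.tsub_apply, Finsupp.single_eq_of_ne' (Ne.symm hjs)]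
        congr 1
        simp only [eq_iff_iff]
        constructor
        · rintro ⟨h1, h2⟩
          exact ⟨by omega, fun j hj => by rw [← happ j hj]; exact h2 j hj⟩
        · rintro ⟨h1, h2⟩
          exact ⟨by omega, fun j hj => by rw [happ j hj]; exact h2 j hj⟩
    · rw [T_succ_of_le ℓ i d (by omega), MvPolynomial.coeff_zero, if_neg]
      rintro ⟨h1, h2⟩
      have : m = 0 := by
        ext j
        exact h2 j (by omega)
      rw [this, (mdeg_eq_zero_iff (0 : Fin ℓ →₀ ℕ)).2 rfl] at h1
      omega
termination_by (d, ℓ - i)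
decreasing_by
  · exact Prod.Lex.right _ (by omega)
  · exact Prod.Lex.left _ _ (by omega)

section hsymmBridge
set_option linter.unusedSectionVars false
variable {σ : Type*} [Fintype σ] [DecidableEq σ] {R : Type*} [CommSemiring R]

lemma multiset_prod_X (m : Multiset σ) :
    ((m.map (X : σ → MvPolynomial σ R)).prod) = monomial (Multiset.toFinsupp m) 1 := by
  induction m using Multiset.induction with
  | empty => simp [monomial_zero']
  | cons a s ih =>
      rw [Multiset.map_cons, Multiset.prod_cons, ih, MvPolynomial.X, MvPolynomial.monomial_mul, one_mul,
        ← Multiset.singleton_add, map_add, Multiset.toFinsupp_singleton]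

lemma mdeg_toFinsupp (s : Multiset σ) : mdeg (Multiset.toFinsupp s) = Multiset.card s :=
  Multiset.toFinsupp_sum_eq s

lemma coeff_hsymm (d : ℕ) (m : σ →₀ ℕ) :
    coeff m (hsymm σ R d) = if mdeg m = d then 1 else 0 := by
  rw [hsymm]
  simp_rw [multiset_prod_X, MvPolynomial.coeff_sum, MvPolynomial.coeff_monomial]
  by_cases h : mdeg m = d
  · have hcard : Multiset.card (Finsupp.toMultiset m) = d := by
      rw [Finsupp.card_toMultiset]; exact h
    set s₀ : Sym σ d := ⟨Finsupp.toMultiset m, hcard⟩ with hs₀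
    have key : ∀ x : Sym σ d,
        (if Multiset.toFinsupp x.1 = m then (1 : R) else 0)
          = if x = s₀ then 1 else 0 := by
      intro x
      congr 1
      simp only [eq_iff_iff]
      constructor
      · intro hx
        apply Subtype.ext
        show x.1 = Finsupp.toMultiset m
        rw [← hx, Multiset.toFinsupp_toMultiset]
      · intro hx; rw [hx, hs₀, Finsupp.toMultiset_toFinsupp]
    simp only [key]
    rw [Finset.sum_ite_eq' Finset.univ s₀ fun _ => (1 : R), if_pos (Finset.mem_univ _), if_pos h]
  · rw [if_neg h]
    apply Finset.sum_eq_zero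
    intro s _
    rw [if_neg]
    intro heq
    apply h
    rw [← heq, mdeg_toFinsupp, s.2]

end hsymmBridge

lemma T_eq_hsymm (ℓ d : ℕ) : T ℓ 0 d = hsymm (Fin ℓ) (ZMod 2) d := by
  apply MvPolynomial.ext
  intro m
  rw [coeff_T, coeff_hsymm]
  congr 1
  simp only [eq_iff_iff]
  constructor
  · rintro ⟨h1, _⟩; exact h1
  · intro h1; exact ⟨h1, fun j hj => absurd hj (by omega)⟩


abbrev φ (ℓ : ℕ) := MvPolynomial.finSuccEquiv (ZMod 2) ℓ

lemma phi_T_succ (ℓ i d : ℕ) :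
    φ ℓ (T (ℓ+1) (i+1) d) = Polynomial.C (T ℓ i d) := by
  match d with
  | 0 => rw [T_zero, T_zero, map_one, map_one]
  | (d+1) =>
    by_cases hi : i < ℓ
    · rw [T_succ_of_lt (ℓ+1) (i+1) d (by omega), T_succ_of_lt ℓ i d hi,
        map_add, map_mul, phi_T_succ ℓ (i+1) (d+1), phi_T_succ ℓ i d,
        show (⟨i+1, by omega⟩ : Fin (ℓ+1)) = Fin.succ ⟨i, hi⟩ from rfl,
        finSuccEquiv_X_succ, map_add, map_mul]
    · rw [T_succ_of_le (ℓ+1) (i+1) d (by omega), T_succ_of_le ℓ i d (by omega),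
        map_zero, map_zero]
termination_by (d, ℓ - i)
decreasing_by
  · exact Prod.Lex.right _ (by omega)
  · exact Prod.Lex.left _ _ (by omega)

lemma phi_T_zero_monic (ℓ d : ℕ) :
    (φ ℓ (T (ℓ+1) 0 d)).Monic ∧ (φ ℓ (T (ℓ+1) 0 d)).degree = d := by
  induction d with
  | zero => rw [T_zero, map_one]; exact ⟨monic_one, degree_one⟩
  | succ d ih =>
    rw [T_succ_of_lt (ℓ+1) 0 d (by omega), map_add, map_mul,
      show (⟨0, by omega⟩ : Fin (ℓ+1)) = 0 from rfl, finSuccEquiv_X_zero,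
      phi_T_succ ℓ 0 (d+1)]
    have hXp : (Polynomial.X * φ ℓ (T (ℓ+1) 0 d)).Monic := monic_X.mul ih.1
    have hdeg : (Polynomial.X * φ ℓ (T (ℓ+1) 0 d)).degree = ((d+1 : ℕ) : WithBot ℕ) := by
      rw [degree_mul, degree_X, ih.2]
      rw [show ((d+1 : ℕ) : WithBot ℕ) = (1 : WithBot ℕ) + ((d : ℕ) : WithBot ℕ) from by
        push_cast; ring]
    have hlt : (Polynomial.C (T ℓ 0 (d+1))).degree < (Polynomial.X * φ ℓ (T (ℓ+1) 0 d)).degree := by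
      apply lt_of_le_of_lt degree_C_le
      rw [hdeg]
      exact_mod_cast Nat.succ_pos d
    refine ⟨?_, ?_⟩
    · rw [add_comm]
      exact hXp.add_of_left hlt
    · rw [add_comm, degree_add_eq_left_of_degree_lt hlt, hdeg]

lemma monic_dvd_of_C_mul_dvd {R : Type*} [CommRing R] [Nontrivial R] {f : R[X]} (hf : f.Monic)
    {c : R} (hc : ∀ s : R, c * s = 0 → s = 0) {q : R[X]}
    (h : f ∣ Polynomial.C c * q) : f ∣ q := by
  have e : Polynomial.C c * q = f * (Polynomial.C c * (q /ₘ f)) + Polynomial.C c * (q %ₘ f) := by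
    conv_lhs => rw [← modByMonic_add_div q f]
    ring
  have h2 : f ∣ Polynomial.C c * (q %ₘ f) := by
    rw [e] at h
    exact (dvd_add_right (dvd_mul_right f _)).mp h
  have h3 : Polynomial.C c * (q %ₘ f) = 0 := by
    by_contra h0
    have hlt := degree_modByMonic_lt q hf
    obtain ⟨w, hw⟩ := h2
    have hwne : w ≠ 0 := by rintro rfl; rw [mul_zero] at hw; exact h0 hw
    have hdeq : (Polynomial.C c * (q %ₘ f)).degree = w.degree + f.degree := by
      rw [hw, mul_comm, hf.degree_mul]
    have hge : f.degree ≤ (Polynomial.C c * (q %ₘ f)).degree := by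
      rw [hdeq]
      exact le_add_of_nonneg_left (Polynomial.zero_le_degree_iff.2 hwne)
    have hle : (Polynomial.C c * (q %ₘ f)).degree ≤ (q %ₘ f).degree :=
      le_trans (degree_mul_le _ _) (by simpa using add_le_add degree_C_le (le_refl (q %ₘ f).degree))
    exact absurd (lt_of_le_of_lt (le_trans hge hle) hlt) (lt_irrefl _)
  have h4 : q %ₘ f = 0 := by
    apply Polynomial.ext
    intro n
    have := congrArg (fun p => Polynomial.coeff p n) h3
    simp only [Polynomial.coeff_C_mul, Polynomial.coeff_zero] at this
    simpa using hc _ this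
  rw [← modByMonic_eq_zero_iff_dvd hf]
  exact h4

lemma key_lemma {S : Type*} [CommRing S] (J : Ideal S) (f : S[X]) (hf : f.Monic) (c : S)
    (hc : ∀ s, c * s ∈ J → s ∈ J) (q : S[X])
    (h : Polynomial.C c * q ∈ Ideal.span {f} ⊔ Ideal.map (Polynomial.C (R := S)) J) :
    q ∈ Ideal.span {f} ⊔ Ideal.map (Polynomial.C (R := S)) J := by
  by_cases hJ : J = ⊤
  · subst hJ
    rw [Ideal.map_top]
    exact le_sup_right (α := Ideal S[X]) (Submodule.mem_top)
  haveI : Nontrivial (S ⧸ J) := Ideal.Quotient.nontrivial_iff.mpr hJ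
  set ψ : S[X] →+* (S ⧸ J)[X] := Polynomial.mapRingHom (Ideal.Quotient.mk J) with hψ
  have hsurj : Function.Surjective ψ := Polynomial.map_surjective _ Ideal.Quotient.mk_surjective
  have hker : RingHom.ker ψ = Ideal.map (Polynomial.C (R := S)) J := by
    rw [hψ, Polynomial.ker_mapRingHom, Ideal.mk_ker]
  set I : Ideal S[X] := Ideal.span {f} ⊔ Ideal.map (Polynomial.C (R := S)) J with hI
  have hmapI : Ideal.map ψ I = Ideal.span {ψ f} := by
    rw [hI, Ideal.map_sup, Ideal.map_span, Set.image_singleton]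
    have : Ideal.map ψ (Ideal.map (Polynomial.C (R := S)) J) = ⊥ := by
      rw [Ideal.map_map]
      rw [Ideal.map_eq_bot_iff_le_ker]
      intro x hx
      simp only [RingHom.mem_ker, RingHom.comp_apply]
      show ψ (Polynomial.C x) = 0
      rw [hψ]
      simp [Polynomial.map_C, Ideal.Quotient.eq_zero_iff_mem.2 hx]
    rw [this, sup_bot_eq]
  have hcbar : ∀ s : S ⧸ J, Ideal.Quotient.mk J c * s = 0 → s = 0 := by
    intro s hs
    obtain ⟨x, rfl⟩ := Ideal.Quotient.mk_surjective s
    rw [← map_mul, Ideal.Quotient.eq_zero_iff_mem] at hs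
    rw [Ideal.Quotient.eq_zero_iff_mem]
    exact hc x hs
  have hdvd : ψ f ∣ ψ q := by
    apply monic_dvd_of_C_mul_dvd (hf.map _) hcbar
    have : ψ (Polynomial.C c * q) ∈ Ideal.map ψ I := Ideal.mem_map_of_mem ψ h
    rw [hmapI, Ideal.mem_span_singleton] at this
    rwa [map_mul, hψ, Polynomial.coe_mapRingHom, Polynomial.map_C] at this
  have : ψ q ∈ Ideal.map ψ I := by
    rw [hmapI, Ideal.mem_span_singleton]
    exact hdvd
  obtain ⟨x, hxI, hx⟩ := (Ideal.mem_map_iff_of_surjective ψ hsurj).1 this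
  have : q - x ∈ RingHom.ker ψ := by
    rw [RingHom.mem_ker, map_sub, hx, sub_self]
  have hqx : q - x ∈ I := by
    rw [hker] at this
    exact le_sup_right (α := Ideal S[X]) this
  have := I.add_mem hqx hxI
  simpa using this

/-- span of the triangular generators `T ℓ i (a+i)`, `i ∈ s`. -/
def spanG (ℓ a : ℕ) (s : Set ℕ) : Ideal (MvPolynomial (Fin ℓ) (ZMod 2)) :=
  Ideal.span ((fun i => T ℓ i (a + i)) '' s)

lemma spanG_mono (ℓ a : ℕ) {s t : Set ℕ} (h : s ⊆ t) : spanG ℓ a s ≤ spanG ℓ a t :=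
  Ideal.span_mono (Set.image_mono h)

lemma G_mem_spanG (ℓ a : ℕ) {i : ℕ} {s : Set ℕ} (h : i ∈ s) : T ℓ i (a + i) ∈ spanG ℓ a s :=
  Ideal.subset_span (Set.mem_image_of_mem _ h)

lemma T_zero_of_le (ℓ i d : ℕ) (h : ℓ ≤ i) (hd : 1 ≤ d) : T ℓ i d = 0 := by
  obtain ⟨d', rfl⟩ := Nat.exists_eq_succ_of_ne_zero (by omega : d ≠ 0)
  exact T_succ_of_le ℓ i d' h

/-- E1: `T ℓ i (a+i+s)` lies in the span of `g_i, …, g_{i+s}`. -/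
lemma T_mem_spanG (ℓ a : ℕ) (ha : 1 ≤ a) :
    ∀ s i, T ℓ i (a + i + s) ∈ spanG ℓ a (Set.Icc i (i + s)) := by
  intro s
  induction s with
  | zero =>
    intro i
    rw [Nat.add_zero]
    exact G_mem_spanG ℓ a (Set.mem_Icc.2 ⟨le_refl i, by omega⟩)
  | succ s ih =>
    intro i
    by_cases hi : i < ℓ
    · have h1 : a + i + (s+1) = (a + i + s) + 1 := by omega
      rw [h1, T_succ_of_lt ℓ i (a+i+s) hi]
      apply Ideal.add_mem
      · have h2 : a + i + s + 1 = a + (i+1) + s := by omega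
        rw [h2]
        exact spanG_mono ℓ a (Set.Icc_subset_Icc (by omega) (by omega)) (ih (i+1))
      · exact Ideal.mul_mem_left _ _
          (spanG_mono ℓ a (Set.Icc_subset_Icc (le_refl i) (by omega)) (ih i))
    · rw [T_zero_of_le ℓ i _ (by omega) (by omega)]
      exact Ideal.zero_mem _
    
/-- E1': congruence `T ℓ i (a+i+s) ≡ g_{i+s}` modulo `g_i, …, g_{i+s-1}`. -/
lemma T_sub_G_mem_spanG (ℓ a : ℕ) (ha : 1 ≤ a) :
    ∀ s i, T ℓ i (a + i + s) - T ℓ (i+s) (a + (i+s)) ∈ spanG ℓ a (Set.Ico i (i + s)) := by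
  intro s
  induction s with
  | zero =>
    intro i
    rw [Nat.add_zero, Nat.add_zero, sub_self]
    exact Ideal.zero_mem _
  | succ s ih =>
    intro i
    by_cases hi : i < ℓ
    · have h1 : a + i + (s+1) = (a + i + s) + 1 := by omega
      rw [h1, T_succ_of_lt ℓ i (a+i+s) hi]
      have key : T ℓ (i+1) (a + i + s + 1) + X ⟨i, hi⟩ * T ℓ i (a+i+s)
            - T ℓ (i+(s+1)) (a + (i+(s+1)))
          = (T ℓ (i+1) (a + (i+1) + s) - T ℓ ((i+1)+s) (a + ((i+1)+s)))
            + X ⟨i, hi⟩ * T ℓ i (a+i+s) := by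
        have e1 : a + i + s + 1 = a + (i+1) + s := by omega
        have e2 : i + (s+1) = (i+1) + s := by omega
        rw [e1, e2]
        ring
      rw [key]
      apply Ideal.add_mem
      · exact spanG_mono ℓ a (Set.Ico_subset_Ico (by omega) (by omega)) (ih (i+1))
      · apply Ideal.mul_mem_left
        have : Set.Icc i (i+s) ⊆ Set.Ico i (i+(s+1)) := by
          intro x hx
          simp only [Set.mem_Icc] at hx
          simp only [Set.mem_Ico]
          omega
        exact spanG_mono ℓ a this (T_mem_spanG ℓ a ha s i)
    · rw [T_zero_of_le ℓ i _ (by omega) (by omega),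
        T_zero_of_le ℓ (i+(s+1)) _ (by omega) (by omega), sub_zero]
      exact Ideal.zero_mem _

/-- E2: the triangular generators lie in the span of the `h`'s. -/
lemma G_mem_spanH (ℓ a k : ℕ) (ha : 1 ≤ a) :
    ∀ i m, i ≤ m → m < k →
      T ℓ i (a + m) ∈ Ideal.span ((fun j => T ℓ 0 (a + j)) '' Set.Iio k) := by
  intro i
  induction i with
  | zero => intro m _ hmk; exact Ideal.subset_span (Set.mem_image_of_mem _ hmk)
  | succ i ih =>
    intro m him hmk
    by_cases hi : i < ℓ
    · have h1 : a + m = (a + m - 1) + 1 := by omega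
      have h2 : T ℓ i (a+m) = T ℓ (i+1) (a+m) + X ⟨i, hi⟩ * T ℓ i (a+m-1) := by
        rw [h1, T_succ_of_lt ℓ i (a+m-1) hi, ← h1]
      have h3 : T ℓ (i+1) (a+m) = T ℓ i (a+m) - X ⟨i, hi⟩ * T ℓ i (a+m-1) := by
        rw [h2]; ring
      rw [h3]
      apply Ideal.sub_mem
      · exact ih m (by omega) hmk
      · apply Ideal.mul_mem_left
        have h4 : a + m - 1 = a + (m-1) := by omega
        rw [h4]
        exact ih (m-1) (by omega) (by omega)
    · rw [T_zero_of_le ℓ (i+1) _ (by omega) (by omega)]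
      exact Ideal.zero_mem _

lemma mem_map_ringEquiv {A B : Type*} [CommRing A] [CommRing B] (e : A ≃+* B) (I : Ideal A)
    (x : A) : e x ∈ I.map (e : A →+* B) ↔ x ∈ I := by
  constructor
  · intro h
    obtain ⟨y, hy, hyx⟩ := (Ideal.mem_map_iff_of_surjective _ e.surjective).1 h
    rwa [← e.injective hyx]
  · exact fun h => Ideal.mem_map_of_mem _ h

/-- Main induction: `g_k` is a non-zero-divisor modulo `(g_0, …, g_{k-1})`. -/
lemma main_nzd : ∀ ℓ a k, 1 ≤ a → k < ℓ →
    ∀ p, T ℓ k (a + k) * p ∈ spanG ℓ a (Set.Iio k) → p ∈ spanG ℓ a (Set.Iio k) := by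
  intro ℓ
  induction ℓ with
  | zero => intro a k _ hk; omega
  | succ ℓ ih =>
    intro a k ha hk p hp
    match k with
    | 0 =>
      have hempty : spanG (ℓ+1) a (Set.Iio 0) = ⊥ := by
        rw [spanG, show Set.Iio 0 = (∅ : Set ℕ) from by ext x; simp, Set.image_empty,
          Ideal.span_empty]
      rw [hempty] at hp ⊢
      rw [Ideal.mem_bot] at hp ⊢
      have hT : T (ℓ+1) 0 (a+0) ≠ 0 := by
        intro h0
        have := (phi_T_zero_monic ℓ (a+0)).1.ne_zero
        rw [h0, map_zero] at this
        exact this rfl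
      rcases mul_eq_zero.1 hp with h | h
      · exact absurd h hT
      · exact h
    | (k+1) =>
      -- pass through φ
      set e : MvPolynomial (Fin (ℓ+1)) (ZMod 2) ≃+* Polynomial (MvPolynomial (Fin ℓ) (ZMod 2)) :=
        (φ ℓ).toRingEquiv with he
      set f : Polynomial (MvPolynomial (Fin ℓ) (ZMod 2)) := φ ℓ (T (ℓ+1) 0 (a+0)) with hf
      set J : Ideal (MvPolynomial (Fin ℓ) (ZMod 2)) := spanG ℓ (a+1) (Set.Iio k) with hJ
      have hCj : ∀ j : ℕ, e (T (ℓ+1) (j+1) (a+(j+1)))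
          = Polynomial.C (T ℓ j ((a+1)+j)) := by
        intro j
        show φ ℓ _ = _
        rw [show a + (j+1) = (a+1) + j from by omega]
        exact phi_T_succ ℓ j ((a+1)+j)
      have himg : (spanG (ℓ+1) a (Set.Iio (k+1))).map (e : _ →+* _)
          = Ideal.span {f} ⊔ Ideal.map (Polynomial.C (R := MvPolynomial (Fin ℓ) (ZMod 2))) J := by
        apply le_antisymm
        · rw [Ideal.map_le_iff_le_comap, spanG, Ideal.span_le]
          rintro x ⟨j, hj, rfl⟩
          simp only [Set.mem_Iio] at hj
          simp only [SetLike.mem_coe, Ideal.mem_comap]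
          show e _ ∈ _
          match j with
          | 0 => exact Ideal.mem_sup_left (Ideal.subset_span rfl)
          | (j+1) =>
            rw [hCj j]
            exact Ideal.mem_sup_right
              (Ideal.mem_map_of_mem _ (G_mem_spanG ℓ (a+1) (Set.mem_Iio.2 (by omega))))
        · apply sup_le
          · rw [Ideal.span_le]
            rintro x rfl
            exact Ideal.mem_map_of_mem _ (G_mem_spanG (ℓ+1) a (Set.mem_Iio.2 (by omega)))
          · rw [Ideal.map_le_iff_le_comap, hJ, spanG, Ideal.span_le]
            rintro x ⟨j, hj, rfl⟩
            simp only [Set.mem_Iio] at hj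
            simp only [SetLike.mem_coe, Ideal.mem_comap]
            show Polynomial.C _ ∈ _
            rw [← hCj j]
            exact Ideal.mem_map_of_mem _ (G_mem_spanG (ℓ+1) a (Set.mem_Iio.2 (by omega)))
      have hmul : e (T (ℓ+1) (k+1) (a + (k+1)) * p)
          = Polynomial.C (T ℓ k ((a+1) + k)) * e p := by
        rw [map_mul]
        congr 1
        show φ ℓ (T (ℓ+1) (k+1) (a+(k+1))) = _
        rw [show a + (k+1) = (a+1) + k from by omega]
        exact phi_T_succ ℓ k ((a+1)+k)
      have hp' : e (T (ℓ+1) (k+1) (a + (k+1)) * p) ∈ (spanG (ℓ+1) a (Set.Iio (k+1))).map (e : _ →+* _) :=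
        Ideal.mem_map_of_mem _ hp
      rw [himg, hmul] at hp'
      have hq := key_lemma J f ((phi_T_zero_monic ℓ (a+0)).1) (T ℓ k ((a+1)+k))
        (fun s hs => ih (a+1) k (by omega) (by omega) s hs) (e p) hp'
      rw [← himg, mem_map_ringEquiv] at hq
      exact hq

section
variable {R : Type*} [CommRing R]

lemma smul_reg_of_ideal (I : Ideal R) (r : R) (h : ∀ x, r * x ∈ I → x ∈ I) :
    IsSMulRegular (R ⧸ (I • (⊤ : Submodule R R))) r := by
  have hIT : (I • (⊤ : Submodule R R)) = I := by
    rw [Ideal.smul_eq_mul, Ideal.mul_top]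
  intro x y hxy
  obtain ⟨x, rfl⟩ := Submodule.Quotient.mk_surjective _ x
  obtain ⟨y, rfl⟩ := Submodule.Quotient.mk_surjective _ y
  have hxy' : (Submodule.Quotient.mk (r * x) : R ⧸ (I • (⊤ : Submodule R R)))
      = Submodule.Quotient.mk (r * y) := hxy
  rw [Submodule.Quotient.eq, hIT] at hxy'
  rw [Submodule.Quotient.eq, hIT]
  rename' hxy' => hxy
  have : r * (x - y) ∈ I := by
    have : r * x - r * y = r * (x - y) := by ring
    rwa [this] at hxy
  exact h _ this

end

/-- The complete homogeneous symmetric polynomials `f_{n−ℓ+1}, …, f_n` in `ℓ`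
variables form a regular sequence in `𝔽₂[x₁,…,x_ℓ]` whenever `n ≥ ℓ ≥ 1`. -/
theorem hsymm_regular_sequence (n ℓ : ℕ) (hℓ : 1 ≤ ℓ) (hn : ℓ ≤ n) :
    RingTheory.Sequence.IsRegular (MvPolynomial (Fin ℓ) (ZMod 2))
      (List.ofFn fun j : Fin ℓ => hsymm (Fin ℓ) (ZMod 2) (n - ℓ + 1 + j.1)) := by
  set a : ℕ := n - ℓ + 1 with ha
  have ha1 : 1 ≤ a := by omega
  set L : List (MvPolynomial (Fin ℓ) (ZMod 2)) :=
    List.ofFn (fun j : Fin ℓ => hsymm (Fin ℓ) (ZMod 2) (n - ℓ + 1 + j.1)) with hL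
  have hlen : L.length = ℓ := by rw [hL, List.length_ofFn]
  have hget : ∀ (i : ℕ) (hi : i < ℓ), L[i]'(by omega) = T ℓ 0 (a + i) := by
    intro i hi
    have h1 : L[i]'(by omega) = hsymm (Fin ℓ) (ZMod 2) (a + i) := by
      simp [hL, ha]
    rw [h1, T_eq_hsymm]
  -- the ideal of the first i elements
  have htake : ∀ (i : ℕ), i ≤ ℓ →
      Ideal.ofList (L.take i) = Ideal.span ((fun j => T ℓ 0 (a + j)) '' Set.Iio i) := by
    intro i hi
    apply le_antisymm
    · rw [Ideal.span_le]
      intro r hr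
      simp only [Set.mem_setOf_eq] at hr
      rw [List.mem_iff_getElem] at hr
      obtain ⟨j, hj, rfl⟩ := hr
      have hj' : j < i := by
        have := (List.length_take (i := i) (l := L)) ▸ hj
        omega
      rw [List.getElem_take, hget j (by omega)]
      exact Ideal.subset_span ⟨j, Set.mem_Iio.2 hj', rfl⟩
    · rw [Ideal.span_le]
      rintro r ⟨j, hj, rfl⟩
      simp only [Set.mem_Iio] at hj
      apply Ideal.subset_span
      simp only [Set.mem_setOf_eq]
      rw [List.mem_iff_getElem]
      refine ⟨j, by rw [List.length_take]; omega, ?_⟩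
      rw [List.getElem_take, hget j (by omega)]
  -- span of h's = span of g's
  have hHG : ∀ (i : ℕ), i ≤ ℓ →
      Ideal.span ((fun j => T ℓ 0 (a + j)) '' Set.Iio i) = spanG ℓ a (Set.Iio i) := by
    intro i hi
    apply le_antisymm
    · rw [Ideal.span_le]
      rintro r ⟨j, hj, rfl⟩
      simp only [Set.mem_Iio] at hj
      have h1 : a + j = a + 0 + j := by omega
      have h2 := T_mem_spanG ℓ a ha1 j 0
      rw [← h1] at h2
      refine spanG_mono ℓ a ?_ h2
      intro x hx
      simp only [Set.mem_Icc] at hx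
      simp only [Set.mem_Iio]
      omega
    · rw [spanG, Ideal.span_le]
      rintro r ⟨j, hj, rfl⟩
      simp only [Set.mem_Iio] at hj
      exact G_mem_spanH ℓ a i ha1 j j (le_refl j) hj
  -- non-zero-divisor property for h's
  have hnzd : ∀ (i : ℕ), i < ℓ → ∀ p,
      T ℓ 0 (a + i) * p ∈ Ideal.span ((fun j => T ℓ 0 (a + j)) '' Set.Iio i) →
      p ∈ Ideal.span ((fun j => T ℓ 0 (a + j)) '' Set.Iio i) := by
    intro i hi p hp
    rw [hHG i (by omega)] at hp ⊢
    have hw := T_sub_G_mem_spanG ℓ a ha1 i 0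
    have h0 : (0 : ℕ) + i = i := by omega
    rw [h0] at hw
    have h1 : a + 0 + i = a + i := by omega
    rw [h1] at hw
    have hico : Set.Ico 0 i = Set.Iio i := by
      ext x; simp
    rw [hico] at hw
    -- T ℓ 0 (a+i) = w + T ℓ i (a+i), w ∈ spanG
    set w := T ℓ 0 (a + i) - T ℓ i (a + i) with hwdef
    have hsplit : T ℓ 0 (a + i) * p = w * p + T ℓ i (a + i) * p := by
      rw [hwdef]; ring
    have hgp : T ℓ i (a + i) * p ∈ spanG ℓ a (Set.Iio i) := by
      have := Ideal.sub_mem _ hp (Ideal.mul_mem_right p _ hw)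
      rwa [hsplit, add_sub_cancel_left] at this
    exact main_nzd ℓ a i ha1 hi p hgp
  constructor
  · -- IsWeaklyRegular
    constructor
    intro i hilen
    rw [hlen] at hilen
    have h1 : L[i]'(by omega) = T ℓ 0 (a + i) := hget i hilen
    rw [h1, htake i (by omega)]
    exact smul_reg_of_ideal _ _ (hnzd i hilen)
  · -- properness
    intro htop
    have hLL : L.take ℓ = L := by
      apply List.take_of_length_le
      omega
    have h2 : Ideal.ofList L • (⊤ : Submodule _ _) = Ideal.ofList L := by
      rw [Ideal.smul_eq_mul, Ideal.mul_top]
    rw [h2] at htop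
    have h3 : (1 : MvPolynomial (Fin ℓ) (ZMod 2)) ∈ Ideal.ofList L := by
      rw [← htop]; trivial
    have h4 : Ideal.ofList L ≤ RingHom.ker (constantCoeff (R := ZMod 2) (σ := Fin ℓ)) := by
      rw [← hLL, htake ℓ (le_refl ℓ), Ideal.span_le]
      rintro r ⟨j, hj, rfl⟩
      simp only [SetLike.mem_coe, RingHom.mem_ker]
      have : constantCoeff (T ℓ 0 (a + j)) = coeff 0 (T ℓ 0 (a + j)) := rfl
      rw [this, coeff_T]
      rw [if_neg]
      rintro ⟨hdeg, -⟩
      have : mdeg (0 : Fin ℓ →₀ ℕ) = 0 := by simp [mdeg]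
      omega
    have h5 := h4 h3
    rw [RingHom.mem_ker, map_one] at h5
    exact one_ne_zero h5

end HsymmRegularAux
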